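/- Let $h > 0$ and $\varepsilon > 0$. Suppose $a : (-\infty, t_{\max}) \to \mathbb{R}_{>0}$ is differentiable with $(a(t) - e^{ht})/e^{(2+\varepsilon)ht} \to 0$ and $(\dot a(t) - h e^{ht})/e^{(2+\varepsilon)ht} \to 0$ as $t \to -\infty$. Then $H(t) = \dot a(t)/a(t) \to h$ as $t \to -\infty$, and there exists $c \in \mathbb{R}$ such that $\frac{1}{a(t)} + H(t)\eta(t) \to c$ as $t \to -\infty$, where $\eta(t) = -\int_t^{t_\mathrm{L}} \frac{d\tilde t}{a(\tilde t)}$ for a fixed $t_\mathrm{L}$. -/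

import Mathlib

open Real Filter intervalIntegral

private lemma exp_mul_tendsto_zero' {c : ℝ} (hc : 0 < c) :
    Tendsto (fun t => Real.exp (c * t)) atBot (nhds 0) :=
  Real.tendsto_exp_atBot.comp (tendsto_id.const_mul_atBot hc)

private lemma integral_exp_mul'' (c y T : ℝ) (hc : c ≠ 0) :
    ∫ s in y..T, Real.exp (c * s) = (Real.exp (c * T) - Real.exp (c * y)) / c := by
  have h1 : ∀ x : ℝ, HasDerivAt (fun s => Real.exp (c * s) / c) (Real.exp (c * x)) x := by
    intro x
    have h0 : HasDerivAt (fun s : ℝ => c * s) c x := by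
      simpa using (hasDerivAt_id x).const_mul c
    have := h0.exp.div_const c
    simpa [mul_div_cancel_right₀ _ hc] using this
  rw [intervalIntegral.integral_eq_sub_of_hasDerivAt (fun x _ => h1 x)
    ((Real.continuous_exp.comp (continuous_const.mul continuous_id)).intervalIntegrable y T)]
  ring

private lemma integrableOn_exp_mul_Iic' {c : ℝ} (hc : 0 < c) (T : ℝ) :
    MeasureTheory.IntegrableOn (fun t => Real.exp (c * t)) (Set.Iic T) := by
  refine MeasureTheory.integrableOn_Iic_of_intervalIntegral_norm_bounded
    (Real.exp (c * T) / c) T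
    (fun y => (Real.continuous_exp.comp (continuous_const.mul continuous_id)).integrableOn_Ioc)
    tendsto_id ?_
  filter_upwards with y
  simp only [Real.norm_eq_abs, Real.abs_exp, id]
  rw [integral_exp_mul'' c y T (ne_of_gt hc)]
  have := Real.exp_pos (c * y)
  rw [div_le_div_iff_of_pos_right hc]
  linarith

/-- Conditions for `C¹` extendibility: if `a(t) = e^{ht} + o(e^{(2+ε)ht})` and
`a'(t) = h e^{ht} + o(e^{(2+ε)ht})` as `t → -∞`, then `H → h` and
`1/a + H·η` converges to a real number. -/
theorem C1_extendibility_conditions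
    (a : ℝ → ℝ) (tmax h ε tL : ℝ) (hh : 0 < h) (hε : 0 < ε) (htL : tL < tmax)
    (ha_diff : ∀ t ∈ Set.Iio tmax, DifferentiableAt ℝ a t)
    (ha_pos : ∀ t ∈ Set.Iio tmax, 0 < a t)
    (ha_asym : Tendsto
      (fun t => (a t - Real.exp (h * t)) / Real.exp ((2 + ε) * h * t))
      atBot (nhds 0))
    (ha'_asym : Tendsto
      (fun t => (deriv a t - h * Real.exp (h * t)) / Real.exp ((2 + ε) * h * t))
      atBot (nhds 0))
    (η : ℝ → ℝ) (hη : η = fun t => -(∫ s in t..tL, 1 / a s)) :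
    Tendsto (fun t => deriv a t / a t) atBot (nhds h) ∧
      ∃ c : ℝ, Tendsto (fun t => 1 / a t + (deriv a t / a t) * η t)
        atBot (nhds c) := by
  have hh' : h ≠ 0 := ne_of_gt hh
  have hexp1 : Tendsto (fun t => Real.exp ((1 + ε) * h * t)) atBot (nhds 0) := by
    have : (0:ℝ) < (1 + ε) * h := by positivity
    simpa [mul_assoc] using exp_mul_tendsto_zero' this
  have hexpε : Tendsto (fun t => Real.exp (ε * h * t)) atBot (nhds 0) := by
    have : (0:ℝ) < ε * h := by positivity
    simpa [mul_assoc] using exp_mul_tendsto_zero' this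
  -- a / e^{ht} → 1
  have key_g : ∀ t : ℝ, a t / Real.exp (h * t) =
      1 + (a t - Real.exp (h * t)) / Real.exp ((2 + ε) * h * t)
        * Real.exp ((1 + ε) * h * t) := by
    intro t
    have hsplit : Real.exp ((2 + ε) * h * t)
        = Real.exp (h * t) * Real.exp ((1 + ε) * h * t) := by
      rw [← Real.exp_add]; ring_nf
    rw [hsplit]
    have e1 : Real.exp (h * t) ≠ 0 := Real.exp_ne_zero _
    have e2 : Real.exp ((1 + ε) * h * t) ≠ 0 := Real.exp_ne_zero _
    field_simp
    ring
  have hg : Tendsto (fun t => a t / Real.exp (h * t)) atBot (nhds 1) := by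
    have h2 : Tendsto (fun t => 1 + (a t - Real.exp (h * t)) / Real.exp ((2 + ε) * h * t)
        * Real.exp ((1 + ε) * h * t)) atBot (nhds (1 + 0 * 0)) :=
      tendsto_const_nhds.add (ha_asym.mul hexp1)
    rw [show (1:ℝ) + 0 * 0 = 1 by ring] at h2
    exact h2.congr fun t => (key_g t).symm
  -- a' / e^{ht} → h
  have key_g' : ∀ t : ℝ, deriv a t / Real.exp (h * t) =
      h + (deriv a t - h * Real.exp (h * t)) / Real.exp ((2 + ε) * h * t)
        * Real.exp ((1 + ε) * h * t) := by
    intro t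
    have hsplit : Real.exp ((2 + ε) * h * t)
        = Real.exp (h * t) * Real.exp ((1 + ε) * h * t) := by
      rw [← Real.exp_add]; ring_nf
    rw [hsplit]
    have e1 : Real.exp (h * t) ≠ 0 := Real.exp_ne_zero _
    have e2 : Real.exp ((1 + ε) * h * t) ≠ 0 := Real.exp_ne_zero _
    field_simp
    ring
  have hg' : Tendsto (fun t => deriv a t / Real.exp (h * t)) atBot (nhds h) := by
    have h2 : Tendsto (fun t => h + (deriv a t - h * Real.exp (h * t))
        / Real.exp ((2 + ε) * h * t) * Real.exp ((1 + ε) * h * t)) atBot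
        (nhds (h + 0 * 0)) := tendsto_const_nhds.add (ha'_asym.mul hexp1)
    rw [show h + 0 * 0 = h by ring] at h2
    exact h2.congr fun t => (key_g' t).symm
  -- H → h
  have hH : Tendsto (fun t => deriv a t / a t) atBot (nhds h) := by
    have hq := hg'.div hg one_ne_zero
    rw [div_one] at hq
    refine hq.congr' ?_
    filter_upwards [eventually_lt_atBot tmax] with t ht
    have ha0 : a t ≠ 0 := ne_of_gt (ha_pos t ht)
    have hE : Real.exp (h * t) ≠ 0 := Real.exp_ne_zero _
    rw [Pi.div_apply]
    field_simp
  -- e^{ht}/a → 1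
  have hginv : Tendsto (fun t => Real.exp (h * t) / a t) atBot (nhds 1) := by
    have := hg.inv₀ one_ne_zero
    simpa [inv_div] using this
  refine ⟨hH, ?_⟩
  -- Θ = 1/a - e^{-ht}
  set Θ : ℝ → ℝ := fun t => 1 / a t - Real.exp (-(h * t)) with hΘdef
  have hsplit2 : ∀ t : ℝ, Real.exp ((2 + ε) * h * t)
      = Real.exp (h * t) * (Real.exp (ε * h * t) * Real.exp (h * t)) := by
    intro t
    rw [← Real.exp_add, ← Real.exp_add]; ring_nf
  have hΘrep : ∀ t < tmax, Θ t =
      -((a t - Real.exp (h * t)) / Real.exp ((2 + ε) * h * t)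
        * Real.exp (ε * h * t) * (Real.exp (h * t) / a t)) := by
    intro t ht
    have ha0 : a t ≠ 0 := ne_of_gt (ha_pos t ht)
    have e1 : Real.exp (h * t) ≠ 0 := Real.exp_ne_zero _
    have e2 : Real.exp (ε * h * t) ≠ 0 := Real.exp_ne_zero _
    simp only [hΘdef, Real.exp_neg, hsplit2 t]
    field_simp
    ring
  have hΘ0 : Tendsto Θ atBot (nhds 0) := by
    have lim := (((ha_asym.mul hexpε).mul hginv)).neg
    rw [show -((0:ℝ) * 0 * 1) = 0 by ring] at lim
    refine lim.congr' ?_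
    filter_upwards [eventually_lt_atBot tmax] with t ht
    exact (hΘrep t ht).symm
  -- bound on Θ
  have hbound : ∀ᶠ t in atBot, |Θ t| ≤ 2 * Real.exp (ε * h * t) := by
    have e1 := Metric.tendsto_nhds.mp ha_asym 1 one_pos
    simp only [Real.dist_eq, sub_zero] at e1
    have e2 : ∀ᶠ t in atBot, Real.exp (h * t) / a t ≤ 2 := by
      filter_upwards [Metric.tendsto_nhds.mp hginv 1 one_pos] with t ht
      rw [Real.dist_eq] at ht
      have := (abs_lt.mp ht).2
      linarith
    filter_upwards [e1, e2, eventually_lt_atBot tmax] with t h1 h2 ht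
    have ha0 : 0 < a t := ha_pos t ht
    rw [hΘrep t ht, abs_neg, abs_mul, abs_mul]
    have hEa : |Real.exp (h * t) / a t| ≤ 2 := by
      rw [abs_of_pos (div_pos (Real.exp_pos _) ha0)]; exact h2
    have hee : |Real.exp (ε * h * t)| = Real.exp (ε * h * t) :=
      abs_of_pos (Real.exp_pos _)
    rw [hee]
    calc |(a t - Real.exp (h * t)) / Real.exp ((2 + ε) * h * t)|
          * Real.exp (ε * h * t) * |Real.exp (h * t) / a t|
        ≤ 1 * Real.exp (ε * h * t) * 2 := by
          apply mul_le_mul _ hEa (abs_nonneg _) (by positivity)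
          apply mul_le_mul h1.le le_rfl (Real.exp_pos _).le zero_le_one
      _ = 2 * Real.exp (ε * h * t) := by ring
  obtain ⟨T, hT⟩ := eventually_atBot.mp
    ((hbound.and (eventually_lt_atBot tmax)).and (eventually_le_atBot tL))
  have hTmax : T < tmax := ((hT T le_rfl).1).2
  have hTtL : T ≤ tL := (hT T le_rfl).2
  -- continuity
  have hcont : ∀ t ∈ Set.Iio tmax, ContinuousAt (fun s => 1 / a s) t := fun t ht =>
    ContinuousAt.div continuousAt_const (ha_diff t ht).continuousAt
      (ne_of_gt (ha_pos t ht))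
  have hexpc : Continuous fun s : ℝ => Real.exp (-(h * s)) :=
    Real.continuous_exp.comp ((continuous_const.mul continuous_id).neg)
  have hΘcont : ∀ t ∈ Set.Iio tmax, ContinuousAt Θ t := fun t ht =>
    (hcont t ht).sub hexpc.continuousAt
  -- integrability of Θ on Iic tL
  have hΘmT : MeasureTheory.IntegrableOn Θ (Set.Iic T) := by
    have hmeas : MeasureTheory.AEStronglyMeasurable Θ
        (MeasureTheory.volume.restrict (Set.Iic T)) := by
      apply ContinuousOn.aestronglyMeasurable _ measurableSet_Iic
      intro t ht
      exact (hΘcont t (lt_of_le_of_lt ht hTmax)).continuousWithinAt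
    refine MeasureTheory.Integrable.mono'
      ((integrableOn_exp_mul_Iic' (show (0:ℝ) < ε * h by positivity) T).const_mul 2)
      hmeas ?_
    rw [MeasureTheory.ae_restrict_iff' measurableSet_Iic]
    refine MeasureTheory.ae_of_all _ fun t ht => ?_
    have := ((hT t ht).1).1
    simpa [Real.norm_eq_abs, mul_assoc] using this
  have hΘmid : MeasureTheory.IntegrableOn Θ (Set.Icc T tL) := by
    apply ContinuousOn.integrableOn_Icc
    intro t ht
    exact (hΘcont t (lt_of_le_of_lt ht.2 htL)).continuousWithinAt
  have hΘint : MeasureTheory.IntegrableOn Θ (Set.Iic tL) := by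
    have hsub : Set.Iic tL ⊆ Set.Iic T ∪ Set.Icc T tL := by
      intro x hx
      rcases le_or_gt x T with h' | h'
      · exact Or.inl h'
      · exact Or.inr ⟨h'.le, hx⟩
    exact (hΘmT.union hΘmid).mono_set hsub
  have hJ : Tendsto (fun t => ∫ s in t..tL, Θ s) atBot
      (nhds (∫ s in Set.Iic tL, Θ s)) :=
    MeasureTheory.intervalIntegral_tendsto_integral_Iic tL hΘint tendsto_id
  -- second term limit
  have hterm2 : Tendsto
      (fun t => Real.exp (-(h * t)) * (h - deriv a t / a t) / h) atBot (nhds 0) := by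
    have rep : ∀ t < tmax, Real.exp (-(h * t)) * (h - deriv a t / a t) =
        -(((deriv a t - h * Real.exp (h * t)) / Real.exp ((2 + ε) * h * t)
          - h * ((a t - Real.exp (h * t)) / Real.exp ((2 + ε) * h * t)))
          * Real.exp (ε * h * t) * (Real.exp (h * t) / a t)) := by
      intro t ht
      have ha0 : a t ≠ 0 := ne_of_gt (ha_pos t ht)
      have e1 : Real.exp (h * t) ≠ 0 := Real.exp_ne_zero _
      have e2 : Real.exp (ε * h * t) ≠ 0 := Real.exp_ne_zero _
      rw [Real.exp_neg, hsplit2 t]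
      field_simp
      ring
    have lim := (((ha'_asym.sub (ha_asym.const_mul h)).mul hexpε).mul hginv).neg
    rw [show -(((0:ℝ) - h * 0) * 0 * 1) = 0 by ring] at lim
    have h3 : Tendsto (fun t => Real.exp (-(h * t)) * (h - deriv a t / a t))
        atBot (nhds 0) := by
      refine lim.congr' ?_
      filter_upwards [eventually_lt_atBot tmax] with t ht
      exact (rep t ht).symm
    simpa using h3.div_const h
  -- third term limit
  have hterm3 : Tendsto
      (fun t => (deriv a t / a t)
        * (Real.exp (-(h * tL)) / h - ∫ s in t..tL, Θ s)) atBot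
      (nhds (h * (Real.exp (-(h * tL)) / h - ∫ s in Set.Iic tL, Θ s))) :=
    hH.mul (tendsto_const_nhds.sub hJ)
  have hG := (hΘ0.add hterm2).add hterm3
  refine ⟨_, hG.congr' ?_⟩
  filter_upwards [eventually_lt_atBot tmax, eventually_le_atBot tL] with t htm htl
  have ha0 : a t ≠ 0 := ne_of_gt (ha_pos t htm)
  -- interval integrability on [t, tL]
  have hint1 : IntervalIntegrable (fun s => 1 / a s) MeasureTheory.volume t tL := by
    apply ContinuousOn.intervalIntegrable
    intro s hs
    rw [Set.uIcc_of_le htl] at hs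
    exact (hcont s (lt_of_le_of_lt hs.2 htL)).continuousWithinAt
  have hint2 : IntervalIntegrable (fun s => Real.exp (-(h * s)))
      MeasureTheory.volume t tL := hexpc.intervalIntegrable t tL
  have hint3 : IntervalIntegrable Θ MeasureTheory.volume t tL := hint1.sub hint2
  have hdecomp : (∫ s in t..tL, 1 / a s) =
      (Real.exp (-(h * t)) - Real.exp (-(h * tL))) / h + ∫ s in t..tL, Θ s := by
    have h4 : (∫ s in t..tL, 1 / a s) =
        (∫ s in t..tL, Real.exp (-(h * s))) + ∫ s in t..tL, Θ s := by
      rw [← intervalIntegral.integral_add hint2 hint3]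
      apply intervalIntegral.integral_congr
      intro s _
      simp [hΘdef]
    rw [h4]
    have h5 := integral_exp_mul'' (-h) t tL (neg_ne_zero.mpr hh')
    simp only [neg_mul] at h5
    rw [h5]
    ring
  rw [hη]
  simp only
  rw [hdecomp, hΘdef]
  field_simp
  ring
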